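/- For every x ∈ ℝ × ℝ₊ and all sufficiently large n, the iterates satisfy ‖gᵐ(x/ρⁿ)‖∞ ≤ ψ(‖x‖∞) ρ^{m−n} for m = 1,…,n, where ψ : ℝ₊ → ℝ₊ is a finite function. -/

import Mathlib

set_option maxHeartbeats 1000000 in
lemma aux_global (a1 a2 γ ρ u v : ℝ)
    (ha1 : 0 < a1) (ha2 : 0 < a2) (hγ0 : 0 < γ)
    (hc2 : a2 - γ * a1 > 0) (hρs : ρ * (a2 + γ * a1) = 2 * a2)
    (hu : |u| ≤ a1) (hv : 0 ≤ v) :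
    |2*(a1+u)*a1/(2*a1+u+γ*v) - a1| ≤ a1 ∧
    0 ≤ 2*v*a2/((a2+γ*a1)+γ*u+v) ∧
    2*v*a2/((a2+γ*a1)+γ*u+v) ≤ ρ * (a2+γ*a1) := by
  obtain ⟨hu1, hu2⟩ := abs_le.mp hu
  have hD1 : 0 < 2*a1 + u + γ*v := by nlinarith
  have hD2 : 0 < (a2+γ*a1) + γ*u + v := by nlinarith
  refine ⟨abs_le.mpr ⟨?_, ?_⟩, ?_, ?_⟩
  · have h0 : 0 ≤ 2*(a1+u)*a1/(2*a1+u+γ*v) :=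
      div_nonneg (by nlinarith) hD1.le
    linarith
  · rw [sub_le_iff_le_add, div_le_iff₀ hD1]
    nlinarith [mul_nonneg (mul_nonneg ha1.le hγ0.le) hv]
  · exact div_nonneg (by nlinarith) hD2.le
  · rw [hρs, div_le_iff₀ hD2]
    have hγp : -(γ*a1) ≤ γ*u := by
      nlinarith [mul_le_mul_of_nonneg_left hu1 hγ0.le]
    nlinarith [mul_le_mul_of_nonneg_left hγp ha2.le]


set_option maxHeartbeats 2000000 in
lemma aux_local (a1 a2 γ ρ c δ u v w : ℝ)
    (ha1 : 0 < a1) (ha2 : 0 < a2) (hγ0 : 0 < γ) (hγ1 : γ < 1)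
    (hs : 0 < a2 + γ*a1) (hρ1 : 1 < ρ) (hρs : ρ * (a2 + γ*a1) = 2*a2)
    (hc0 : 0 < c) (ha1c : 1 ≤ 2*a1*c) (hγcs : γ ≤ c*(a2+γ*a1))
    (hδ0 : 0 < δ) (hcδ : c*δ = 1/2) (hδa1 : δ ≤ a1)
    (hv : 0 ≤ v) (huw : |u| ≤ w) (hvw : v ≤ w) (hwδ : w ≤ δ) :
    0 ≤ 2*v*a2/((a2+γ*a1)+γ*u+v) ∧
    |2*(a1+u)*a1/(2*a1+u+γ*v) - a1| * (1-c*w) ≤ ρ*w ∧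
    (2*v*a2/((a2+γ*a1)+γ*u+v)) * (1-c*w) ≤ ρ*w := by
  have hρ0 : (0:ℝ) < ρ := lt_trans one_pos hρ1
  have hw0 : (0:ℝ) ≤ w := le_trans (abs_nonneg u) huw
  have hu1 : -w ≤ u := (abs_le.mp huw).1
  have hu2 : u ≤ w := (abs_le.mp huw).2
  have hwa1 : w ≤ a1 := le_trans hwδ hδa1
  have hcw : c * w ≤ 1/2 := by
    calc c * w ≤ c * δ := mul_le_mul_of_nonneg_left hwδ hc0.le
      _ = 1/2 := hcδ
  have h1cw : (0:ℝ) < 1 - c*w := by linarith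
  have hγu : γ * -w ≤ γ * u := mul_le_mul_of_nonneg_left hu1 hγ0.le
  have hD1 : a1 ≤ 2*a1 + u + γ*v := by nlinarith
  have hD1' : 0 < 2*a1 + u + γ*v := lt_of_lt_of_le ha1 hD1
  have hγδ : γ * w ≤ c * (a2+γ*a1) * w := mul_le_mul_of_nonneg_right hγcs hw0
  have hD2 : 0 < (a2+γ*a1) + γ*u + v := by
    have h5 : c * (a2+γ*a1) * w ≤ c * (a2+γ*a1) * δ :=
      mul_le_mul_of_nonneg_left hwδ (mul_nonneg hc0.le hs.le)
    nlinarith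
  refine ⟨div_nonneg (by nlinarith) hD2.le, ?_, ?_⟩
  · have hg1 : 2*(a1+u)*a1/(2*a1+u+γ*v) - a1 = a1*(u-γ*v)/(2*a1+u+γ*v) := by
      field_simp
      ring
    rw [hg1, abs_div, abs_of_pos hD1', div_mul_eq_mul_div, div_le_iff₀ hD1']
    have habs : |a1*(u-γ*v)| ≤ a1*((1+γ)*w) := by
      rw [abs_mul, abs_of_pos ha1]
      have h2 : |u - γ*v| ≤ (1+γ)*w := by
        rw [abs_le]
        constructor <;> nlinarith [mul_le_mul_of_nonneg_left hvw hγ0.le]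
      exact mul_le_mul_of_nonneg_left h2 ha1.le
    have k1 : a1*(1+γ)*(1-c*w) ≤ 2*a1 - w := by
      nlinarith [mul_nonneg (by linarith : (0:ℝ) ≤ 2*a1*c - 1) hw0,
        mul_nonneg (mul_nonneg (by linarith : (0:ℝ) ≤ 2*a1*c - 1) hγ0.le) hw0,
        mul_nonneg (sub_nonneg.mpr hγ1.le) (sub_nonneg.mpr hwa1),
        mul_nonneg (sub_nonneg.mpr hγ1.le) hw0]
    have k2 : 2*a1 - w ≤ ρ*(2*a1+u+γ*v) := by
      nlinarith [mul_nonneg (sub_nonneg.mpr hρ1.le) hD1'.le,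
        mul_nonneg hγ0.le hv]
    nlinarith [mul_le_mul_of_nonneg_right habs h1cw.le,
      mul_le_mul_of_nonneg_right k1 hw0, mul_le_mul_of_nonneg_right k2 hw0]
  · have hg2nn : 0 ≤ 2*v*a2/((a2+γ*a1)+γ*u+v) := div_nonneg (by nlinarith) hD2.le
    rw [div_mul_eq_mul_div, div_le_iff₀ hD2]
    have hmid : (a2+γ*a1)*v*(1-c*w) ≤ w*((a2+γ*a1)+γ*u+v) := by
      nlinarith [mul_nonneg (mul_nonneg (sub_nonneg.mpr hvw) h1cw.le) hs.le,
        mul_nonneg hv hw0,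
        mul_nonneg (mul_nonneg (sub_nonneg.mpr hγcs) hw0) hw0,
        mul_le_mul_of_nonneg_right hγu hw0]
    have hsub : ρ*((a2+γ*a1)*(v*(1-c*w))) = 2*a2*(v*(1-c*w)) := by
      rw [← mul_assoc, hρs]
    nlinarith [mul_le_mul_of_nonneg_left hmid hρ0.le, hsub]



set_option maxHeartbeats 3200000 in
/-- Growth estimate for the iterates of `g` started at `x/ρⁿ`:
`‖gᵐ(x/ρⁿ)‖ ≤ ψ(‖x‖) ρ^{m−n}` for `m = 1,…,n` and all large `n`. -/
theorem growth_estimate_for_g_iterates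
    (a1 a2 γ : ℝ) (ha1 : 0 < a1) (ha2 : 0 < a2) (hγ0 : 0 < γ) (hγ1 : γ < 1)
    (hc1 : a1 - γ * a2 > 0) (hc2 : a2 - γ * a1 > 0)
    (f : ℝ × ℝ → ℝ × ℝ)
    (hf : ∀ x : ℝ × ℝ,
      f x = (2 * x.1 * a1 / (a1 + x.1 + γ * x.2),
             2 * x.2 * a2 / (a2 + γ * x.1 + x.2)))
    (ρ : ℝ) (hρ : ρ = 2 * a2 / (a2 + γ * a1))
    (g : ℝ × ℝ → ℝ × ℝ)
    (hg : ∀ x : ℝ × ℝ, g x = f (((a1 : ℝ), (0 : ℝ)) + x) - ((a1 : ℝ), (0 : ℝ))) :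
    ∃ ψ : ℝ → ℝ, (∀ r, 0 ≤ r → 0 ≤ ψ r) ∧
      ∀ x : ℝ × ℝ, 0 ≤ x.2 → ∃ N : ℕ, ∀ n ≥ N, ∀ m : ℕ, 1 ≤ m → m ≤ n →
        ‖g^[m] ((ρ ^ n)⁻¹ • x)‖ ≤ ψ ‖x‖ * ρ ^ ((m : ℤ) - (n : ℤ)) := by
  have hs : (0:ℝ) < a2 + γ * a1 := by nlinarith
  have hρ1 : 1 < ρ := by rw [hρ, lt_div_iff₀ hs]; nlinarith
  have hρ0 : (0:ℝ) < ρ := lt_trans one_pos hρ1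
  have hρne : ρ ≠ 0 := ne_of_gt hρ0
  have hρs : ρ * (a2 + γ * a1) = 2 * a2 := by rw [hρ]; field_simp
  set c : ℝ := max (1/(2*a1)) (γ/(a2 + γ*a1)) with hcdef
  have hc0 : (0:ℝ) < c := lt_max_of_lt_left (by positivity)
  have hcl : 1/(2*a1) ≤ c := le_max_left _ _
  have hcr : γ/(a2 + γ*a1) ≤ c := le_max_right _ _
  have ha1c : 1 ≤ 2*a1*c := by
    rw [div_le_iff₀ (by positivity)] at hcl; linarith
  have hγcs : γ ≤ c * (a2 + γ*a1) := by
    rw [div_le_iff₀ hs] at hcr; linarith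
  set δ : ℝ := 1/(2*c) with hδdef
  have hδ0 : 0 < δ := by positivity
  have hδa1 : δ ≤ a1 := by
    rw [hδdef, div_le_iff₀ (by positivity)]; nlinarith
  have hcδ : c * δ = 1/2 := by rw [hδdef]; field_simp
  set A : ℝ := c/(ρ-1) with hAdef
  have hA0 : 0 < A := by
    rw [hAdef]; exact div_pos hc0 (by linarith)
  have hAρ : A * (ρ - 1) = c := by
    rw [hAdef, div_mul_cancel₀ _ (sub_ne_zero.mpr (ne_of_gt hρ1))]
  set C1 : ℝ := 2*A + 2/δ with hC1def
  have hC10 : 0 < C1 := by positivity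
  set B : ℝ := max a1 (ρ*(a2 + γ*a1)) with hBdef
  have hB0 : 0 < B := lt_max_of_lt_left ha1
  clear_value c δ A C1 B
  refine ⟨fun r => (2 + B*C1)*r, fun r hr => mul_nonneg (by positivity) hr, ?_⟩
  intro x hx2
  -- explicit formula for g
  have hgc : ∀ p : ℝ × ℝ, g p =
      (2*(a1+p.1)*a1/(2*a1+p.1+γ*p.2) - a1, 2*p.2*a2/((a2+γ*a1)+γ*p.1+p.2)) := by
    intro p
    rw [hg, hf]
    have h1 : (((a1:ℝ),(0:ℝ)) + p).1 = a1 + p.1 := rfl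
    have h2 : (((a1:ℝ),(0:ℝ)) + p).2 = 0 + p.2 := rfl
    rw [h1, h2, Prod.ext_iff]
    constructor
    · show _ - a1 = _
      ring_nf
    · show _ - (0:ℝ) = _
      ring_nf
  -- global invariance
  have hglobal : ∀ p : ℝ × ℝ, |p.1| ≤ a1 → 0 ≤ p.2 →
      |(g p).1| ≤ a1 ∧ 0 ≤ (g p).2 ∧ (g p).2 ≤ ρ * (a2 + γ*a1) := by
    intro p hu hv
    rw [hgc p]
    exact aux_global a1 a2 γ ρ p.1 p.2 ha1 ha2 hγ0 hc2 hρs hu hv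
  -- local contraction-type estimate
  have hlocal : ∀ p : ℝ × ℝ, 0 ≤ p.2 → ‖p‖ ≤ δ →
      0 ≤ (g p).2 ∧ ‖g p‖ * (1 - c*‖p‖) ≤ ρ * ‖p‖ := by
    intro p hv hpδ
    have huw : |p.1| ≤ ‖p‖ := by
      rw [Prod.norm_def, Real.norm_eq_abs, Real.norm_eq_abs]
      exact le_max_left _ _
    have hvw : p.2 ≤ ‖p‖ := by
      rw [Prod.norm_def, Real.norm_eq_abs, Real.norm_eq_abs]
      exact le_trans (le_abs_self _) (le_max_right _ _)
    obtain ⟨H1, H2, H3⟩ := aux_local a1 a2 γ ρ c δ p.1 p.2 ‖p‖ ha1 ha2 hγ0 hγ1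
      hs hρ1 hρs hc0 ha1c hγcs hδ0 hcδ hδa1 hv huw hvw hpδ
    have h1cw : (0:ℝ) ≤ 1 - c*‖p‖ := by
      have : c * ‖p‖ ≤ c * δ := mul_le_mul_of_nonneg_left hpδ hc0.le
      rw [hcδ] at this
      linarith
    rw [hgc p]
    dsimp only
    refine ⟨H1, ?_⟩
    rw [Prod.norm_def, Real.norm_eq_abs, Real.norm_eq_abs,
      max_mul_of_nonneg _ _ h1cw, abs_of_nonneg H1]
    exact max_le H2 H3
  have hg0 : g 0 = 0 := by
    rw [hgc 0]
    simp only [Prod.fst_zero, Prod.snd_zero, mul_zero, add_zero, zero_mul,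
      zero_div, Prod.mk_eq_zero]
    constructor
    · rw [sub_eq_zero, div_eq_iff (by positivity : (0:ℝ) < 2*a1).ne']
      ring
    · trivial
  rcases eq_or_ne x 0 with rfl | hx0
  · refine ⟨1, fun n hn m hm1 hmn => ?_⟩
    rw [smul_zero, Function.iterate_fixed hg0]
    simp
  · have hr0 : 0 < ‖x‖ := norm_pos_iff.mpr hx0
    set r : ℝ := ‖x‖ with hrdef
    obtain ⟨N, hN⟩ := pow_unbounded_of_one_lt (max (C1*r) (r/a1)) hρ1
    refine ⟨N, fun n hn m hm1 hmn => ?_⟩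
    have hρn : max (C1*r) (r/a1) ≤ ρ^n :=
      le_trans hN.le (pow_le_pow_right₀ hρ1.le hn)
    have hρnC : C1*r ≤ ρ^n := le_trans (le_max_left _ _) hρn
    have hρna : r/a1 ≤ ρ^n := le_trans (le_max_right _ _) hρn
    have hρnpos : (0:ℝ) < ρ^n := pow_pos hρ0 n
    set x0 : ℝ × ℝ := (ρ^n)⁻¹ • x with hx0def
    have hx01 : x0.1 = (ρ^n)⁻¹ * x.1 := rfl
    have hx02 : x0.2 = (ρ^n)⁻¹ * x.2 := rfl
    have hw0 : ‖x0‖ = (ρ^n)⁻¹ * r := by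
      rw [hx0def, norm_smul, norm_inv, norm_pow, Real.norm_eq_abs, abs_of_pos hρ0]
    clear_value r x0
    set Φ : ℕ → ℝ := fun k => ρ^((n:ℤ)-(k:ℤ))/r + A*(ρ^(-(k:ℤ)) - 1) with hΦdef
    clear_value Φ
    have hΦlb : ∀ k : ℕ, C1*r ≤ ρ^((n:ℤ)-(k:ℤ)) →
        ρ^((n:ℤ)-(k:ℤ))/(2*r) + 1/δ ≤ Φ k := by
      intro k hk
      have hq : (0:ℝ) < ρ^(-(k:ℤ)) := by positivity
      have hP : (0:ℝ) < ρ^((n:ℤ)-(k:ℤ)) := by positivity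
      have h2 : -A ≤ A*(ρ^(-(k:ℤ)) - 1) := by
        have h2' := mul_nonneg hA0.le hq.le
        linarith
      have h3 : C1/2 ≤ ρ^((n:ℤ)-(k:ℤ))/(2*r) := by
        rw [le_div_iff₀ (by positivity)]
        linarith
      have h4 : Φ k = ρ^((n:ℤ)-(k:ℤ))/(2*r) + ρ^((n:ℤ)-(k:ℤ))/(2*r)
          + A*(ρ^(-(k:ℤ)) - 1) := by
        simp only [hΦdef]
        field_simp
        ring
      rw [h4]
      have h5 : C1 = 2*A + 2/δ := hC1def
      ring_nf at h2 h3 h5 ⊢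
      linarith
    -- the key induction on good indices
    have key : ∀ k : ℕ, C1*r ≤ ρ^((n:ℤ)-(k:ℤ)) →
        0 ≤ (g^[k] x0).2 ∧ ‖g^[k] x0‖ * Φ k ≤ 1 := by
      intro k
      induction k with
      | zero =>
        intro _
        refine ⟨?_, ?_⟩
        · simp only [Function.iterate_zero, id_eq]
          rw [hx02]
          exact mul_nonneg (inv_nonneg.mpr hρnpos.le) hx2
        · simp only [Function.iterate_zero, id_eq]
          rw [hw0]
          have hΦ0 : Φ 0 = ρ^n / r := by
            simp only [hΦdef]
            norm_num
          rw [hΦ0]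
          rw [div_eq_mul_inv]
          field_simp
          norm_num
      | succ k ih =>
        intro hk1
        have hP1 : (0:ℝ) < ρ^((n:ℤ)-((k:ℕ)+1:ℕ)) := by positivity
        have hstep0 : ρ^((n:ℤ)-((k:ℕ)+1:ℕ)) ≤ ρ^((n:ℤ)-(k:ℤ)) := by
          have h : ((n:ℤ)-((k:ℕ)+1:ℕ)) + 1 = (n:ℤ)-(k:ℤ) := by push_cast; ring
          rw [← h, zpow_add₀ hρne, zpow_one]
          exact le_mul_of_one_le_right hP1.le hρ1.le
        have hk : C1*r ≤ ρ^((n:ℤ)-(k:ℤ)) := le_trans hk1 hstep0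
        obtain ⟨hv, hwφ⟩ := ih hk
        have hΦk := hΦlb k hk
        have hΦpos : 0 < Φ k := lt_of_lt_of_le (by positivity) hΦk
        have hΦδ : 1/δ ≤ Φ k := by
          have h6 : (0:ℝ) ≤ ρ^((n:ℤ)-(k:ℤ))/(2*r) := by positivity
          linarith
        have hwk : ‖g^[k] x0‖ ≤ δ := by
          have h1 : ‖g^[k] x0‖ ≤ 1/Φ k := (le_div_iff₀ hΦpos).mpr hwφ
          have h2 : 1/Φ k ≤ δ := by
            rw [div_le_iff₀ hΦpos]
            calc (1:ℝ) = δ * (1/δ) := by field_simp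
              _ ≤ δ * Φ k := mul_le_mul_of_nonneg_left hΦδ hδ0.le
          linarith
        obtain ⟨hv', hstep⟩ := hlocal _ hv hwk
        rw [Function.iterate_succ_apply']
        refine ⟨hv', ?_⟩
        have e1 : ρ * ρ^((n:ℤ)-((k:ℤ)+1)) = ρ^((n:ℤ)-(k:ℤ)) := by
          have h : ((n:ℤ)-((k:ℤ)+1)) + 1 = (n:ℤ)-(k:ℤ) := by ring
          rw [← h, zpow_add₀ hρne, zpow_one]
          ring
        have e2 : ρ * ρ^(-((k:ℤ)+1)) = ρ^(-(k:ℤ)) := by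
          have h : -((k:ℤ)+1) + 1 = -(k:ℤ) := by ring
          rw [← h, zpow_add₀ hρne, zpow_one]
          ring
        have e3 : ρ * A = A + c := by linear_combination hAρ
        have hΦid : ρ * Φ (k+1) + c = Φ k := by
          simp only [hΦdef]
          push_cast
          linear_combination (1/r)*e1 + A*e2 - e3
        have hW0 : (0:ℝ) ≤ ‖g (g^[k] x0)‖ := norm_nonneg _
        have hw0' : (0:ℝ) ≤ ‖g^[k] x0‖ := norm_nonneg _
        have hcw : c*‖g^[k] x0‖ ≤ 1/2 := by
          calc c*‖g^[k] x0‖ ≤ c*δ := mul_le_mul_of_nonneg_left hwk hc0.le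
            _ = 1/2 := hcδ
        have h1cw : (0:ℝ) < 1 - c*‖g^[k] x0‖ := by linarith
        rcases le_or_gt (Φ (k+1)) 0 with hneg | hpos
        · have h7 : (0:ℝ) ≤ ‖g (g^[k] x0)‖ * -Φ (k+1) :=
            mul_nonneg hW0 (neg_nonneg.mpr hneg)
          have h7' : ‖g (g^[k] x0)‖ * Φ (k+1) ≤ 0 := by linarith
          linarith
        · have H1 : ‖g (g^[k] x0)‖ * (1 - c*‖g^[k] x0‖) * Φ (k+1)
              ≤ ρ * ‖g^[k] x0‖ * Φ (k+1) :=
            mul_le_mul_of_nonneg_right hstep hpos.le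
          have H2 : ρ * ‖g^[k] x0‖ * Φ (k+1) = ‖g^[k] x0‖ * Φ k - c*‖g^[k] x0‖ := by
            have h8 : ρ * Φ (k+1) = Φ k - c := by linarith
            calc ρ * ‖g^[k] x0‖ * Φ (k+1) = ‖g^[k] x0‖ * (ρ * Φ (k+1)) := by ring
              _ = ‖g^[k] x0‖ * (Φ k - c) := by rw [h8]
              _ = ‖g^[k] x0‖ * Φ k - c*‖g^[k] x0‖ := by ring
          have H3 : (‖g (g^[k] x0)‖ * Φ (k+1)) * (1 - c*‖g^[k] x0‖)
              ≤ 1 * (1 - c*‖g^[k] x0‖) := by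
            calc (‖g (g^[k] x0)‖ * Φ (k+1)) * (1 - c*‖g^[k] x0‖)
                = ‖g (g^[k] x0)‖ * (1 - c*‖g^[k] x0‖) * Φ (k+1) := by ring
              _ ≤ ρ * ‖g^[k] x0‖ * Φ (k+1) := H1
              _ = ‖g^[k] x0‖ * Φ k - c*‖g^[k] x0‖ := H2
              _ ≤ 1 * (1 - c*‖g^[k] x0‖) := by linarith
          exact le_of_mul_le_mul_right H3 h1cw
    -- global bound for all iterates
    have hglob : ∀ k : ℕ, |(g^[k] x0).1| ≤ a1 ∧ 0 ≤ (g^[k] x0).2 := by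
      intro k
      induction k with
      | zero =>
        constructor
        · simp only [Function.iterate_zero, id_eq]
          rw [hx01, abs_mul, abs_of_pos (inv_pos.mpr hρnpos)]
          have hx1r : |x.1| ≤ r := by
            rw [hrdef, Prod.norm_def, Real.norm_eq_abs, Real.norm_eq_abs]
            exact le_max_left _ _
          have hra : r ≤ a1 * ρ^n := by
            rw [div_le_iff₀ ha1] at hρna
            linarith
          have h9 := mul_le_mul_of_nonneg_left (le_trans hx1r hra)
            (inv_nonneg.mpr hρnpos.le)
          have h10 : (ρ^n)⁻¹ * (a1 * ρ^n) = a1 := by field_simp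
          linarith
        · simp only [Function.iterate_zero, id_eq]
          rw [hx02]
          exact mul_nonneg (inv_nonneg.mpr hρnpos.le) hx2
      | succ k ih =>
        rw [Function.iterate_succ_apply']
        obtain ⟨h1, h2, h3⟩ := hglobal _ ih.1 ih.2
        exact ⟨h1, h2⟩
    have hBbound : ∀ k : ℕ, 1 ≤ k → ‖g^[k] x0‖ ≤ B := by
      intro k hk
      obtain ⟨j, rfl⟩ : ∃ j, k = j+1 := ⟨k-1, (Nat.succ_pred_eq_of_pos hk).symm⟩
      rw [Function.iterate_succ_apply']
      obtain ⟨h1, h2, h3⟩ := hglobal _ (hglob j).1 (hglob j).2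
      rw [Prod.norm_def, Real.norm_eq_abs, Real.norm_eq_abs, hBdef]
      apply max_le
      · exact le_trans h1 (le_max_left _ _)
      · rw [abs_of_nonneg h2]
        exact le_trans h3 (le_max_right _ _)
    -- conclusion
    have hzpos : (0:ℝ) < ρ^((n:ℤ)-(m:ℤ)) := by positivity
    have hzpos' : (0:ℝ) < ρ^((m:ℤ)-(n:ℤ)) := by positivity
    have hzpow_inv : ρ^((m:ℤ)-(n:ℤ)) * ρ^((n:ℤ)-(m:ℤ)) = 1 := by
      rw [← zpow_add₀ hρne]; norm_num
    show ‖g^[m] x0‖ ≤ (2 + B*C1)*r * ρ^((m:ℤ)-(n:ℤ))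
    have h7 : ρ^((n:ℤ)-(m:ℤ)) * ρ^((m:ℤ)-(n:ℤ)) = 1 := by
      rw [← zpow_add₀ hρne]; norm_num
    by_cases hgood : C1*r ≤ ρ^((n:ℤ)-(m:ℤ))
    · obtain ⟨hv, hwφ⟩ := key m hgood
      have hΦm := hΦlb m hgood
      have hΦpos : 0 < Φ m := lt_of_lt_of_le (by positivity) hΦm
      have h3 : ρ^((n:ℤ)-(m:ℤ))/(2*r) ≤ Φ m := by
        have h8 : (0:ℝ) ≤ 1/δ := by positivity
        linarith
      have h4 : ‖g^[m] x0‖ ≤ 1/Φ m := (le_div_iff₀ hΦpos).mpr hwφ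
      have h5 : 1/Φ m ≤ 2*r*ρ^((m:ℤ)-(n:ℤ)) := by
        rw [div_le_iff₀ hΦpos]
        calc (1:ℝ) = ρ^((n:ℤ)-(m:ℤ)) * ρ^((m:ℤ)-(n:ℤ)) := h7.symm
          _ ≤ (Φ m * (2*r)) * ρ^((m:ℤ)-(n:ℤ)) := by
              refine mul_le_mul_of_nonneg_right ?_ hzpos'.le
              rwa [div_le_iff₀ (by positivity)] at h3
          _ = 2*r*ρ^((m:ℤ)-(n:ℤ)) * Φ m := by ring
      have h9 : 0 ≤ B*C1*r*ρ^((m:ℤ)-(n:ℤ)) :=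
        mul_nonneg (mul_nonneg (mul_nonneg hB0.le hC10.le) hr0.le) hzpos'.le
      have heq : (2+B*C1)*r*ρ^((m:ℤ)-(n:ℤ))
          = 2*r*ρ^((m:ℤ)-(n:ℤ)) + B*C1*r*ρ^((m:ℤ)-(n:ℤ)) := by ring
      linarith
    · push_neg at hgood
      have hBm := hBbound m hm1
      have h6 : 1 < C1*r*ρ^((m:ℤ)-(n:ℤ)) := by
        have := mul_lt_mul_of_pos_right hgood hzpos'
        rwa [h7] at this
      have h8 : B ≤ B*(C1*r*ρ^((m:ℤ)-(n:ℤ))) := by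
        nth_rewrite 1 [← mul_one B]
        exact mul_le_mul_of_nonneg_left h6.le hB0.le
      have h9 : 0 ≤ 2*r*ρ^((m:ℤ)-(n:ℤ)) :=
        mul_nonneg (by positivity) hzpos'.le
      have heq : (2+B*C1)*r*ρ^((m:ℤ)-(n:ℤ))
          = 2*r*ρ^((m:ℤ)-(n:ℤ)) + B*(C1*r*ρ^((m:ℤ)-(n:ℤ))) := by ring
      linarith
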